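/- (Perturbation bound, inductive form) Under the assumptions ‖U_j‖₂ ≤ ‖W_j‖₂/d for all j, the layerwise error Δ_i = |f^i_{w+u}(x) − f^i_w(x)|₂ satisfies Δ_i ≤ (1 + 1/d)^i · (∏_{j=1}^i ‖W_j‖₂) · |x|₂ · ∑_{j=1}^i ‖U_j‖₂/‖W_j‖₂ for every 0 ≤ i ≤ d. -/

import Mathlib

/-- Coordinatewise ReLU on vectors. -/
noncomputable def reluV {n : ℕ} (v : EuclideanSpace ℝ (Fin n)) :
    EuclideanSpace ℝ (Fin n) := WithLp.toLp 2 (fun i => max (v i) 0)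

/-- `net W i x` is the output f^i(x) of layer `i` before activation (layers are
    indexed 1,…,d): f¹(x) = W₁ x, f^{i+1}(x) = W_{i+1} φ(f^i(x)); `net W 0 x = x`. -/
noncomputable def net {n : ℕ}
    (W : ℕ → EuclideanSpace ℝ (Fin n) →L[ℝ] EuclideanSpace ℝ (Fin n)) :
    ℕ → EuclideanSpace ℝ (Fin n) → EuclideanSpace ℝ (Fin n)
  | 0, x => x
  | 1, x => W 1 x
  | (i + 2), x => W (i + 2) (reluV (net W (i + 1) x))

lemma euclid_norm_le_of_abs_le {n : ℕ} (a b : EuclideanSpace ℝ (Fin n))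
    (h : ∀ i, |a i| ≤ |b i|) : ‖a‖ ≤ ‖b‖ := by
  rw [EuclideanSpace.norm_eq, EuclideanSpace.norm_eq]
  apply Real.sqrt_le_sqrt
  apply Finset.sum_le_sum
  intro i _
  rw [Real.norm_eq_abs, Real.norm_eq_abs]
  exact pow_le_pow_left₀ (abs_nonneg _) (h i) 2

lemma reluV_lip {n : ℕ} (a b : EuclideanSpace ℝ (Fin n)) :
    ‖reluV a - reluV b‖ ≤ ‖a - b‖ := by
  apply euclid_norm_le_of_abs_le
  intro i
  have : (reluV a - reluV b) i = max (a i) 0 - max (b i) 0 := by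
    simp [reluV]
  rw [this]
  have : (a - b) i = a i - b i := by simp
  rw [this]
  exact abs_max_sub_max_le_abs _ _ _

lemma reluV_norm_le {n : ℕ} (a : EuclideanSpace ℝ (Fin n)) :
    ‖reluV a‖ ≤ ‖a‖ := by
  apply euclid_norm_le_of_abs_le
  intro i
  show |max (a i) 0| ≤ _
  rw [abs_of_nonneg (le_max_right _ _)]
  exact max_le (le_abs_self _) (abs_nonneg _)

lemma net_norm_le {n : ℕ}
    (W : ℕ → EuclideanSpace ℝ (Fin n) →L[ℝ] EuclideanSpace ℝ (Fin n))
    (x : EuclideanSpace ℝ (Fin n)) :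
    ∀ i, ‖net W i x‖ ≤ (∏ j ∈ Finset.Icc 1 i, ‖W j‖) * ‖x‖ := by
  intro i
  induction i with
  | zero =>
    show ‖x‖ ≤ _
    rw [Finset.Icc_eq_empty (by omega), Finset.prod_empty, one_mul]
  | succ k ih =>
    rcases k with _ | m
    · show ‖W 1 x‖ ≤ _
      rw [Finset.Icc_self, Finset.prod_singleton]
      exact (W 1).le_opNorm x
    · have h1 : net W (m + 2) x = W (m + 2) (reluV (net W (m + 1) x)) := rfl
      rw [h1, Finset.prod_Icc_succ_top (by omega : 1 ≤ m + 2)]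
      calc ‖W (m + 2) (reluV (net W (m + 1) x))‖
          ≤ ‖W (m + 2)‖ * ‖reluV (net W (m + 1) x)‖ := (W (m+2)).le_opNorm _
        _ ≤ ‖W (m + 2)‖ * ‖net W (m + 1) x‖ := by
            exact mul_le_mul_of_nonneg_left (reluV_norm_le _) (norm_nonneg _)
        _ ≤ ‖W (m + 2)‖ * ((∏ j ∈ Finset.Icc 1 (m+1), ‖W j‖) * ‖x‖) := by
            exact mul_le_mul_of_nonneg_left ih (norm_nonneg _)
        _ = (∏ j ∈ Finset.Icc 1 (m+1), ‖W j‖) * ‖W (m + 2)‖ * ‖x‖ := by ring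

lemma net_succ_succ {n : ℕ}
    (W : ℕ → EuclideanSpace ℝ (Fin n) →L[ℝ] EuclideanSpace ℝ (Fin n))
    (m : ℕ) (x : EuclideanSpace ℝ (Fin n)) :
    net W (m + 2) x = W (m + 2) (reluV (net W (m + 1) x)) := rfl

lemma real_aux1 (A w X u : ℝ) (hw : w ≠ 0) : A * w * X * (u / w) = A * (u * X) := by
  field_simp

lemma real_aux2 (dd w D t : ℝ) (hd : dd ≠ 0) :
    w * D + (w / dd) * D + t = ((1 + 1/dd) * w) * D + t := by
  field_simp

lemma real_aux3 (K P w X S u : ℝ) (hw : w ≠ 0) :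
    K * (P * w) * X * S + K * P * X * u = K * (P * w) * X * (S + u / w) := by
  field_simp

/-- Perturbation bound, inductive form: under ‖U_j‖₂ ≤ ‖W_j‖₂/d,
    the layerwise error Δ_i = |f^i_{w+u}(x) − f^i_w(x)|₂ satisfies
    Δ_i ≤ (1+1/d)^i · (∏_{j=1}^i ‖W_j‖₂) · |x|₂ · ∑_{j=1}^i ‖U_j‖₂/‖W_j‖₂
    for every 0 ≤ i ≤ d. -/
theorem perturbation_bound_inductive (n d : ℕ) (hd : 1 ≤ d)
    (W U : ℕ → EuclideanSpace ℝ (Fin n) →L[ℝ] EuclideanSpace ℝ (Fin n))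
    (hW : ∀ j ∈ Finset.Icc 1 d, 0 < ‖W j‖)
    (hU : ∀ j ∈ Finset.Icc 1 d, ‖U j‖ ≤ ‖W j‖ / d)
    (x : EuclideanSpace ℝ (Fin n)) :
    ∀ i ≤ d,
      ‖net (fun j => W j + U j) i x - net W i x‖ ≤
        (1 + 1 / (d : ℝ)) ^ i * (∏ j ∈ Finset.Icc 1 i, ‖W j‖) * ‖x‖ *
          ∑ j ∈ Finset.Icc 1 i, ‖U j‖ / ‖W j‖ := by
  have hd0 : (0:ℝ) < d := by exact_mod_cast Nat.lt_of_lt_of_le Nat.zero_lt_one hd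
  have hdne : (d:ℝ) ≠ 0 := ne_of_gt hd0
  have hC0 : (0:ℝ) ≤ 1 + 1 / d := by positivity
  intro i
  induction i with
  | zero =>
    intro _
    show ‖x - x‖ ≤ _
    rw [sub_self, norm_zero, Finset.Icc_eq_empty (by omega), Finset.sum_empty, mul_zero]
  | succ k ih =>
    rcases k with _ | m
    · intro h1d
      show ‖(W 1 + U 1) x - W 1 x‖ ≤ _
      have he : (W 1 + U 1) x - W 1 x = U 1 x := by
        rw [ContinuousLinearMap.add_apply]; abel
      rw [he, Finset.Icc_self, Finset.prod_singleton, Finset.sum_singleton, pow_one]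
      have hw1 : 0 < ‖W 1‖ := hW 1 (Finset.mem_Icc.mpr ⟨le_refl _, hd⟩)
      have hrhs := real_aux1 (1 + 1/(d:ℝ)) ‖W 1‖ ‖x‖ ‖U 1‖ (ne_of_gt hw1)
      rw [hrhs]
      have h1 := (U 1).le_opNorm x
      nlinarith [mul_nonneg (norm_nonneg (U 1)) (norm_nonneg x),
        one_div_nonneg.mpr hd0.le]
    · intro h2d
      have IH := ih (by omega)
      set C : ℝ := 1 + 1 / d with hCdef
      set a := net (fun j => W j + U j) (m + 1) x with ha
      set b := net W (m + 1) x with hb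
      set D := ‖a - b‖ with hD
      set P := ∏ j ∈ Finset.Icc 1 (m+1), ‖W j‖ with hP
      set S := ∑ j ∈ Finset.Icc 1 (m+1), ‖U j‖ / ‖W j‖ with hS
      set w := ‖W (m+2)‖ with hww
      set u := ‖U (m+2)‖ with huu
      set X := ‖x‖ with hX
      have hmem : m + 2 ∈ Finset.Icc 1 d := Finset.mem_Icc.mpr ⟨by omega, by omega⟩
      have hw2 : 0 < w := hW _ hmem
      have hu2 : u ≤ w / d := hU _ hmem
      have hu0 : 0 ≤ u := norm_nonneg _
      have hD0 : 0 ≤ D := norm_nonneg _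
      have hP0 : 0 ≤ P := Finset.prod_nonneg fun j _ => norm_nonneg _
      have hX0 : 0 ≤ X := norm_nonneg _
      have hnb : ‖b‖ ≤ P * X := net_norm_le W x (m + 1)
      have hna : ‖reluV a‖ ≤ D + P * X := by
        calc ‖reluV a‖ ≤ ‖a‖ := reluV_norm_le a
          _ = ‖a - b + b‖ := by rw [sub_add_cancel]
          _ ≤ ‖a - b‖ + ‖b‖ := norm_add_le _ _
          _ ≤ D + P * X := add_le_add_right hnb _
      have hkey : net (fun j => W j + U j) (m + 1 + 1) x - net W (m + 1 + 1) x
          = W (m+2) (reluV a - reluV b) + U (m+2) (reluV a) := by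
        rw [show m + 1 + 1 = m + 2 from rfl, net_succ_succ, net_succ_succ, ← ha, ← hb]
        rw [ContinuousLinearMap.add_apply, map_sub]; abel
      rw [hkey,
        Finset.prod_Icc_succ_top (by omega : 1 ≤ m + 1 + 1),
        Finset.sum_Icc_succ_top (by omega : 1 ≤ m + 1 + 1)]
      have hbound : ‖W (m+2) (reluV a - reluV b) + U (m+2) (reluV a)‖
          ≤ w * D + u * (D + P * X) := by
        calc ‖W (m+2) (reluV a - reluV b) + U (m+2) (reluV a)‖
            ≤ ‖W (m+2) (reluV a - reluV b)‖ + ‖U (m+2) (reluV a)‖ := norm_add_le _ _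
          _ ≤ w * ‖reluV a - reluV b‖ + u * ‖reluV a‖ :=
              add_le_add ((W (m+2)).le_opNorm _) ((U (m+2)).le_opNorm _)
          _ ≤ w * D + u * (D + P * X) := by
              refine add_le_add ?_ ?_
              · exact mul_le_mul_of_nonneg_left (reluV_lip a b) hw2.le
              · exact mul_le_mul_of_nonneg_left hna hu0
      refine hbound.trans ?_
      have hCw0 : 0 ≤ C * w := mul_nonneg hC0 hw2.le
      have hC1 : (1:ℝ) ≤ C ^ (m + 1 + 1) := by
        apply one_le_pow₀
        rw [hCdef]
        have := one_div_nonneg.mpr hd0.le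
        linarith
      have hPXu : 0 ≤ u * (P * X) := mul_nonneg hu0 (mul_nonneg hP0 hX0)
      calc w * D + u * (D + P * X) = w * D + u * D + u * (P * X) := by ring
        _ ≤ w * D + (w / d) * D + u * (P * X) := by
            have := mul_le_mul_of_nonneg_right hu2 hD0
            linarith
        _ = (C * w) * D + u * (P * X) := by rw [hCdef]; exact real_aux2 _ _ _ _ hdne
        _ ≤ (C * w) * (C ^ (m+1) * P * X * S) + u * (P * X) := by
            have := mul_le_mul_of_nonneg_left IH hCw0
            linarith
        _ ≤ (C * w) * (C ^ (m+1) * P * X * S) + C ^ (m+1+1) * (u * (P * X)) := by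
            nlinarith [hC1, hPXu]
        _ = C ^ (m+1+1) * (P * w) * X * S + C ^ (m+1+1) * P * X * u := by ring
        _ = C ^ (m+1+1) * (P * w) * X * (S + u / w) :=
            real_aux3 _ _ _ _ _ _ (ne_of_gt hw2)
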